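/- arXiv:1612.06475 — 2 statements merged into one kernel-verified Lean document; each statement's English description precedes it below -/
import Mathlib

section
/- For every valid non-final configuration c, the dynamic-oracle policy coincides with the abstract F1-optimal oracle: dyna(c) = oracle(c), where oracle(c) = { τ | τ is applicable at c and F1(τ(c)) = F1(c) }. (Theorem 2, main result.) -/
/-!
Formalization of the span-based Structure/Label transition parsing system of
Cross & Huang (2016), "Span-Based Constituency Parsing with a Structure-Label
System and Provably Optimal Dynamic Oracles".

A configuration is `(z, σ, t)` where `z` is the step number, `σ` the stack of
span boundaries and `t` the set of brackets built so far.  A bracket is a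
triple `(X, i, j)` with `X` a nonterminal label and `i < j ≤ n` a span.
-/

namespace SpanParser

structure Config (N : Type*) where
  z : ℕ
  σ : List ℕ
  t : Finset (N × ℕ × ℕ)

variable {N : Type*}

/-- The span of a bracket. -/
def span (b : N × ℕ × ℕ) : ℕ × ℕ := b.2

/-- Top (rightmost) boundary of the stack. -/
def topJ (σ : List ℕ) : ℕ := σ.getLastD 0

/-- Second-to-top boundary of the stack. -/
def topI (σ : List ℕ) : ℕ := σ.dropLast.getLastD 0

/-- Parser actions: shift, combine, label-`X`, and nolabel. -/
inductive Action (N : Type*) where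
  | sh : Action N
  | comb : Action N
  | label : N → Action N
  | nolabel : Action N

variable [DecidableEq N]

/-- Applicability of an action at a configuration (for sentence length `n`). -/
def App (n : ℕ) (c : Config N) : Action N → Prop
  | .sh      => Even c.z ∧ c.σ ≠ [] ∧ topJ c.σ < n
  | .comb    => Even c.z ∧ 3 ≤ c.σ.length
  | .label _ => Odd c.z ∧ 2 ≤ c.σ.length
  | .nolabel => Odd c.z ∧ 2 ≤ c.σ.length ∧ c.z < 4 * n - 1

/-- The result `τ(c)` of applying action `τ` to configuration `c`. -/
def doAct (c : Config N) : Action N → Config N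
  | .sh      => ⟨c.z + 1, c.σ ++ [topJ c.σ + 1], c.t⟩
  | .comb    => ⟨c.z + 1, c.σ.dropLast.dropLast ++ [topJ c.σ], c.t⟩
  | .label X => ⟨c.z + 1, c.σ, insert (X, topI c.σ, topJ c.σ) c.t⟩
  | .nolabel => ⟨c.z + 1, c.σ, c.t⟩

/-- The initial configuration `(0, [0], ∅)`. -/
def initial (N : Type*) : Config N := ⟨0, [0], ∅⟩

/-- One transition step `c ⊢ c'`. -/
def Step (n : ℕ) (c c' : Config N) : Prop := ∃ a, App n c a ∧ c' = doAct c a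

/-- `⊢*`: reflexive-transitive closure of the transition relation. -/
def Reaches (n : ℕ) : Config N → Config N → Prop := Relation.ReflTransGen (Step n)

/-- A configuration is valid if it is reachable from the initial configuration. -/
def Valid (n : ℕ) (c : Config N) : Prop := Reaches n (initial N) c

/-- A final configuration: `σ = [0, n]` and `z = 4n - 2`. -/
def Final (n : ℕ) (c : Config N) : Prop := c.σ = [0, n] ∧ c.z = 4 * n - 2

/-- `D(c)`: the set of trees of final configurations reachable from `c`. -/
def Dset (n : ℕ) (c : Config N) : Set (Finset (N × ℕ × ℕ)) :=
  {t' | ∃ c', Reaches n c c' ∧ Final n c' ∧ c'.t = t'}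

/-- `(i,j) ⪯ (p,q)`: span `(i,j)` is encompassed by `(p,q)`, i.e. `p ≤ i < j ≤ q`. -/
def Enc (s₁ s₂ : ℕ × ℕ) : Prop := s₂.1 ≤ s₁.1 ∧ s₁.1 < s₁.2 ∧ s₁.2 ≤ s₂.2

/-- `(i,j) ≺ (p,q)`: strict encompassment. -/
def SEnc (s₁ s₂ : ℕ × ℕ) : Prop := Enc s₁ s₂ ∧ s₁ ≠ s₂

/-- `tG` is a gold tree for sentence length `n`: valid spans, pairwise-distinct
spans, pairwise non-crossing spans, and exactly one bracket with span `(0, n)`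
(uniqueness follows from distinctness of spans). -/
structure IsGold (n : ℕ) (tG : Finset (N × ℕ × ℕ)) : Prop where
  validSpans : ∀ b ∈ tG, (span b).1 < (span b).2 ∧ (span b).2 ≤ n
  distinctSpans : ∀ b₁ ∈ tG, ∀ b₂ ∈ tG, span b₁ = span b₂ → b₁ = b₂
  noncrossing : ∀ b₁ ∈ tG, ∀ b₂ ∈ tG,
    Enc (span b₁) (span b₂) ∨ Enc (span b₂) (span b₁) ∨
    (span b₁).2 ≤ (span b₂).1 ∨ (span b₂).2 ≤ (span b₁).1
  root : ∃ X, (X, 0, n) ∈ tG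

open Classical in
/-- `left(c)`: gold brackets (strictly, at even steps) encompassing the top
span whose left boundary occurs on the stack. -/
noncomputable def leftSet (tG : Finset (N × ℕ × ℕ)) (c : Config N) :
    Finset (N × ℕ × ℕ) :=
  tG.filter fun b =>
    (if Even c.z then SEnc (topI c.σ, topJ c.σ) (span b)
     else Enc (topI c.σ, topJ c.σ) (span b)) ∧ (span b).1 ∈ c.σ

open Classical in
/-- `right(c)`: gold brackets entirely on the queue. -/
noncomputable def rightSet (tG : Finset (N × ℕ × ℕ)) (c : Config N) :
    Finset (N × ℕ × ℕ) :=
  tG.filter fun b => topJ c.σ ≤ (span b).1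

open Classical in
/-- `reach(c)`: the reachable gold brackets (all of `t_G` at the initial
configuration, whose stack has fewer than two boundaries). -/
noncomputable def reach (tG : Finset (N × ℕ × ℕ)) (c : Config N) :
    Finset (N × ℕ × ℕ) :=
  if c.σ.length < 2 then tG else leftSet tG c ∪ rightSet tG c

/-- The optimal tree `t*(c) = t ∪ reach(c)`. -/
noncomputable def tstar (tG : Finset (N × ℕ × ℕ)) (c : Config N) :
    Finset (N × ℕ × ℕ) :=
  c.t ∪ reach tG c

/-- `b = next(c)`: the `≺`-minimal element of `left(c)`. -/
def IsNext (tG : Finset (N × ℕ × ℕ)) (c : Config N) (b : N × ℕ × ℕ) : Prop :=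
  b ∈ leftSet tG c ∧ ∀ b' ∈ leftSet tG c, Enc (span b) (span b')

/-- The dynamic-oracle policy `dyna(c)` as a predicate on actions. -/
def Dyna (tG : Finset (N × ℕ × ℕ)) (c : Config N) (a : Action N) : Prop :=
  if c.σ.length < 2 then a = Action.sh
  else if Even c.z then
    ∃ b, IsNext tG c b ∧
      (((span b).1 = topI c.σ ∧ topJ c.σ < (span b).2 ∧ a = Action.sh) ∨
       ((span b).1 < topI c.σ ∧ (span b).2 = topJ c.σ ∧ a = Action.comb) ∨
       ((span b).1 < topI c.σ ∧ topJ c.σ < (span b).2 ∧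
          (a = Action.sh ∨ a = Action.comb)))
  else
    (∃ X, (X, topI c.σ, topJ c.σ) ∈ tG ∧ a = Action.label X) ∨
    ((∀ X, (X, topI c.σ, topJ c.σ) ∉ tG) ∧ a = Action.nolabel)

/-- `F1` of a predicted bracket set `t'` against the gold tree `tG`
(`0` when `t' ∩ tG = ∅`). -/
noncomputable def f1 (tG t' : Finset (N × ℕ × ℕ)) : ℝ :=
  if t' ∩ tG = ∅ then 0
  else
    (2 * (((t' ∩ tG).card : ℝ) / (tG.card : ℝ)) * (((t' ∩ tG).card : ℝ) / (t'.card : ℝ))) /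
      ((((t' ∩ tG).card : ℝ) / (tG.card : ℝ)) + (((t' ∩ tG).card : ℝ) / (t'.card : ℝ)))

/-- `F1(c)`: the best `F1` among trees reachable from `c`. -/
noncomputable def configF1 (n : ℕ) (tG : Finset (N × ℕ × ℕ)) (c : Config N) : ℝ :=
  sSup (f1 tG '' Dset n c)

/-- A run of (applicable) actions from one configuration to another. -/
inductive Run (n : ℕ) : Config N → List (Action N) → Config N → Prop
  | refl (c : Config N) : Run n c [] c
  | step {c c' : Config N} {as : List (Action N)} (a : Action N)
      (happ : App n c a) (h : Run n (doAct c a) as c') : Run n c (a :: as) c'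

/-- A run all of whose actions follow the dynamic oracle. -/
inductive DynaRun (n : ℕ) (tG : Finset (N × ℕ × ℕ)) : Config N → Config N → Prop
  | refl (c : Config N) : DynaRun n tG c c
  | step {c c' : Config N} (a : Action N) (happ : App n c a) (hdyna : Dyna tG c a)
      (h : DynaRun n tG (doAct c a) c') : DynaRun n tG c c'

def isSh : Action N → Bool
  | .sh => true
  | _ => false

def isComb : Action N → Bool
  | .comb => true
  | _ => false

/-- Label-step actions: `label-X` or `nolabel`. -/
def isLabelStep : Action N → Bool
  | .label _ => true
  | .nolabel => true
  | _ => false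


/-! ### Auxiliary development -/

section Aux
set_option linter.unusedSectionVars false
variable {N : Type*} [DecidableEq N]

/- #### List helpers -/

lemma eq_dropLast_concat {l : List ℕ} (h : l ≠ []) : l = l.dropLast ++ [topJ l] := by
  rw [topJ, List.getLastD_eq_getLast?, List.getLast?_eq_getLast h]
  exact (List.dropLast_append_getLast h).symm

lemma topJ_concat (l : List ℕ) (a : ℕ) : topJ (l ++ [a]) = a := by
  simp [topJ]

lemma topI_concat (l : List ℕ) (a : ℕ) : topI (l ++ [a]) = topJ l := by
  simp [topI, topJ, List.dropLast_concat]

lemma topJ_eq_getLast {l : List ℕ} (h : l ≠ []) : topJ l = l.getLast h := by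
  rw [topJ, List.getLastD_eq_getLast?, List.getLast?_eq_getLast h]; rfl

lemma topJ_mem {l : List ℕ} (h : l ≠ []) : topJ l ∈ l := by
  rw [topJ_eq_getLast h]; exact List.getLast_mem h

lemma two_decomp {l : List ℕ} (h : 2 ≤ l.length) :
    l = l.dropLast.dropLast ++ [topI l, topJ l] := by
  have h1 : l ≠ [] := by rintro rfl; simp at h
  have h2 : l.dropLast ≠ [] := by
    have := l.length_dropLast
    intro hd; rw [hd] at this; simp at this; omega
  have e1 := eq_dropLast_concat h1
  have e2 := eq_dropLast_concat h2
  have hI : topI l = topJ l.dropLast := rfl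
  rw [hI]
  conv_lhs => rw [e1, e2]
  simp

lemma sorted_mem_le_topJ {l : List ℕ} (hs : l.Pairwise (· < ·)) {x : ℕ} (hx : x ∈ l) :
    x ≤ topJ l := by
  have h1 : l ≠ [] := by rintro rfl; simp at hx
  rw [eq_dropLast_concat h1] at hs hx
  rw [List.pairwise_append] at hs
  rcases List.mem_append.1 hx with h | h
  · exact le_of_lt (hs.2.2 x h _ (by simp))
  · simp at h; omega

/- #### Span helpers -/

lemma enc_iff {i j p q : ℕ} : Enc (i, j) (p, q) ↔ p ≤ i ∧ i < j ∧ j ≤ q := Iff.rfl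

lemma senc_iff {i j p q : ℕ} :
    SEnc (i, j) (p, q) ↔ (p ≤ i ∧ i < j ∧ j ≤ q) ∧ ¬(i = p ∧ j = q) := by
  unfold SEnc
  rw [enc_iff, ne_eq, Prod.mk.injEq]

/- #### The structural invariant -/

/-- The structural invariant maintained by all valid configurations. -/
structure Inv (n : ℕ) (tG : Finset (N × ℕ × ℕ)) (c : Config N) : Prop where
  ne : c.σ ≠ []
  sorted : c.σ.Pairwise (· < ·)
  head0 : c.σ.head? = some 0
  le_n : ∀ x ∈ c.σ, x ≤ n
  zval : c.z + 2 * c.σ.length = 4 * topJ c.σ + (if Even c.z then 2 else 1)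
  treach : ∀ b ∈ c.t, b ∉ reach tG c
  tvalid : ∀ b ∈ c.t, (span b).1 < (span b).2
  tspan : ∀ b ∈ c.t, (span b).2 ≤ topJ c.σ ∧ ((span b).2 = topJ c.σ →
      (if Even c.z then topI c.σ ≤ (span b).1 else topI c.σ < (span b).1))

namespace Inv

variable {n : ℕ} {tG : Finset (N × ℕ × ℕ)} {c : Config N}

variable (hI : Inv n tG c)
include hI

lemma zero_mem : (0 : ℕ) ∈ c.σ := by
  have := hI.head0
  cases hσ : c.σ with
  | nil => rw [hσ] at this; simp at this
  | cons a l => rw [hσ] at this; simp at this; simp [← this]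

lemma mem_le_topJ {x : ℕ} (hx : x ∈ c.σ) : x ≤ topJ c.σ :=
  sorted_mem_le_topJ hI.sorted hx

lemma topJ_le_n : topJ c.σ ≤ n := hI.le_n _ (topJ_mem hI.ne)

lemma decomp (hL : 2 ≤ c.σ.length) :
    c.σ = c.σ.dropLast.dropLast ++ [topI c.σ, topJ c.σ] := two_decomp hL

lemma d_facts (hL : 2 ≤ c.σ.length) :
    topI c.σ < topJ c.σ ∧ (∀ x ∈ c.σ.dropLast.dropLast, x < topI c.σ) ∧
      c.σ.dropLast.dropLast.Pairwise (· < ·) := by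
  have hs := hI.sorted
  rw [hI.decomp hL, List.pairwise_append] at hs
  refine ⟨?_, fun x hx => ?_, hs.1⟩
  · have := hs.2.1; simp at this; exact this
  · have := hs.2.2 x hx (topI c.σ) (by simp); exact this

lemma topI_lt_topJ (hL : 2 ≤ c.σ.length) : topI c.σ < topJ c.σ := (hI.d_facts hL).1

lemma topI_mem (hL : 2 ≤ c.σ.length) : topI c.σ ∈ c.σ := by
  have h2 : c.σ.dropLast ≠ [] := by
    have := c.σ.length_dropLast
    intro hd; rw [hd] at this; simp at this; omega
  exact List.dropLast_subset _ (topJ_mem h2)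

lemma mem_σ_iff (hL : 2 ≤ c.σ.length) {x : ℕ} :
    x ∈ c.σ ↔ x ∈ c.σ.dropLast.dropLast ∨ x = topI c.σ ∨ x = topJ c.σ := by
  conv_lhs => rw [hI.decomp hL]
  simp

lemma mem_le_topI (hL : 2 ≤ c.σ.length) {x : ℕ} (hx : x ∈ c.σ) (hlt : x < topJ c.σ) :
    x ≤ topI c.σ := by
  rcases (hI.mem_σ_iff hL).1 hx with h | h | h
  · exact le_of_lt ((hI.d_facts hL).2.1 x h)
  · omega
  · omega

lemma lt_topI_mem (hL : 2 ≤ c.σ.length) {x : ℕ} (hx : x ∈ c.σ) (hlt : x < topI c.σ) :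
    x ∈ c.σ.dropLast.dropLast := by
  have hij := hI.topI_lt_topJ hL
  rcases (hI.mem_σ_iff hL).1 hx with h | h | h
  · exact h
  · omega
  · omega

lemma topI_pos (hL : 3 ≤ c.σ.length) : 0 < topI c.σ := by
  have h0 := hI.zero_mem
  have hij := hI.topI_lt_topJ (by omega)
  rcases (hI.mem_σ_iff (by omega)).1 h0 with h | h | h
  · exact (hI.d_facts (by omega)).2.1 0 h
  · -- topI = 0 but length ≥ 3 means dropLast.dropLast nonempty with head 0... contradiction:
    exfalso
    have hd : c.σ.dropLast.dropLast ≠ [] := by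
      have h1 := c.σ.length_dropLast
      have h2 := c.σ.dropLast.length_dropLast
      intro hnil
      rw [hnil] at h2
      simp at h2
      omega
    obtain ⟨y, d', hd'⟩ := List.exists_cons_of_ne_nil hd
    have hh := hI.head0
    rw [hI.decomp (by omega), hd'] at hh
    simp at hh
    have : y < topI c.σ := (hI.d_facts (by omega)).2.1 y (by rw [hd']; simp)
    omega
  · omega

lemma σ_len1 (hL : c.σ.length < 2) : c.σ = [0] ∧ c.z = 0 ∧ c.t = ∅ := by
  have h1 : c.σ.length = 1 := by
    have := List.length_pos_iff.2 hI.ne; omega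
  obtain ⟨a, ha⟩ := List.length_eq_one_iff.1 h1
  have hh := hI.head0
  rw [ha] at hh; simp at hh
  subst hh
  have hσ : c.σ = [0] := ha
  have hz := hI.zval
  rw [hσ] at hz
  have hj : topJ [0] = 0 := rfl
  rw [hj] at hz
  simp at hz
  have hz0 : c.z = 0 := by
    by_cases he : Even c.z
    · rw [if_pos he] at hz; omega
    · rw [if_neg he] at hz; omega
  refine ⟨hσ, hz0, ?_⟩
  rw [Finset.eq_empty_iff_forall_notMem]
  intro b hb
  have h1 := hI.tvalid b hb
  have h2 := (hI.tspan b hb).1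
  rw [hσ, hj] at h2
  omega

lemma odd_len (ho : ¬ Even c.z) : 2 ≤ c.σ.length := by
  by_contra h
  have := (hI.σ_len1 (by omega)).2.1
  exact ho (by rw [this]; exact Even.zero)

lemma z_le (hn : 1 ≤ n) : c.z + 2 ≤ 4 * n := by
  have hz := hI.zval
  have hs := hI.topJ_le_n
  by_cases hL : 2 ≤ c.σ.length
  · by_cases he : Even c.z
    · rw [if_pos he] at hz; omega
    · rw [if_neg he] at hz; omega
  · have := (hI.σ_len1 (by omega)).2.1; omega

lemma odd_z_le (ho : ¬ Even c.z) : c.z + 3 ≤ 4 * n := by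
  have hz := hI.zval
  have hs := hI.topJ_le_n
  have hL := hI.odd_len ho
  rw [if_neg ho] at hz
  omega

lemma final_of_top (he : Even c.z) (hL : 2 ≤ c.σ.length) (hti : topI c.σ = 0)
    (htj : topJ c.σ = n) : Final n c := by
  have hd : c.σ.dropLast.dropLast = [] := by
    by_contra hne
    have h3 : 3 ≤ c.σ.length := by
      have h := List.length_pos_iff.2 hne
      have e1 := c.σ.length_dropLast
      have e2 := c.σ.dropLast.length_dropLast
      omega
    have := hI.topI_pos h3
    omega
  have hσ : c.σ = [0, n] := by
    have h := hI.decomp hL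
    rw [hd, hti, htj] at h
    simpa using h
  have hz := hI.zval
  rw [if_pos he, hσ] at hz
  have hj : topJ [0, n] = n := rfl
  rw [hj] at hz
  simp at hz
  exact ⟨hσ, by omega⟩

end Inv

/- #### reach characterizations -/

lemma reach_subset_tG (tG : Finset (N × ℕ × ℕ)) (c : Config N) : reach tG c ⊆ tG := by
  classical
  unfold reach leftSet rightSet
  split
  · exact subset_rfl
  · intro b hb
    rcases Finset.mem_union.1 hb with h | h <;> exact (Finset.mem_filter.1 h).1

lemma mem_reach_low {tG : Finset (N × ℕ × ℕ)} {c : Config N} (hL : c.σ.length < 2)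
    {b : N × ℕ × ℕ} : b ∈ reach tG c ↔ b ∈ tG := by
  rw [reach, if_pos hL]

lemma mem_leftSet {tG : Finset (N × ℕ × ℕ)} {c : Config N} {b : N × ℕ × ℕ} :
    b ∈ leftSet tG c ↔ b ∈ tG ∧
      (if Even c.z then SEnc (topI c.σ, topJ c.σ) (span b)
        else Enc (topI c.σ, topJ c.σ) (span b)) ∧ (span b).1 ∈ c.σ := by
  classical
  simp [leftSet, Finset.mem_filter, and_assoc]

lemma mem_reach {tG : Finset (N × ℕ × ℕ)} {c : Config N} (hL : 2 ≤ c.σ.length)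
    {b : N × ℕ × ℕ} :
    b ∈ reach tG c ↔ b ∈ tG ∧
      (((if Even c.z then SEnc (topI c.σ, topJ c.σ) (span b)
          else Enc (topI c.σ, topJ c.σ) (span b)) ∧ (span b).1 ∈ c.σ) ∨
        topJ c.σ ≤ (span b).1) := by
  classical
  rw [reach, if_neg (by omega)]
  simp only [Finset.mem_union, Finset.mem_filter, leftSet, rightSet]
  tauto

/- #### Shapes of `doAct` -/

lemma sh_σ (c : Config N) : (doAct c Action.sh).σ = c.σ ++ [topJ c.σ + 1] := rfl
lemma sh_z (c : Config N) : (doAct c Action.sh).z = c.z + 1 := rfl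
lemma sh_t (c : Config N) : (doAct c Action.sh).t = c.t := rfl
lemma comb_σ (c : Config N) :
    (doAct c Action.comb).σ = c.σ.dropLast.dropLast ++ [topJ c.σ] := rfl
lemma comb_z (c : Config N) : (doAct c Action.comb).z = c.z + 1 := rfl
lemma comb_t (c : Config N) : (doAct c Action.comb).t = c.t := rfl

lemma sh_len (c : Config N) : (doAct c Action.sh).σ.length = c.σ.length + 1 := by
  rw [sh_σ]; simp

lemma comb_len (c : Config N) (h : 2 ≤ c.σ.length) :
    (doAct c Action.comb).σ.length = c.σ.length - 1 := by
  rw [comb_σ]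
  have e1 := c.σ.length_dropLast
  have e2 := c.σ.dropLast.length_dropLast
  simp
  omega

lemma not_even_succ {z : ℕ} (he : Even z) : ¬ Even (z + 1) := by
  simp [Nat.even_add_one, he]

lemma even_succ_of_odd {z : ℕ} (ho : ¬ Even z) : Even (z + 1) := by
  simpa [Nat.even_add_one] using ho

/- #### reach evolution: shift -/

lemma reach_sh_subset {n : ℕ} {tG : Finset (N × ℕ × ℕ)} {c : Config N}
    (hI : Inv n tG c) (he : Even c.z) (hL : 2 ≤ c.σ.length) :
    reach tG (doAct c Action.sh) ⊆ reach tG c := by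
  intro b hb
  obtain ⟨Y, p, q⟩ := b
  have hL' : 2 ≤ (doAct c Action.sh).σ.length := by rw [sh_len]; omega
  rw [mem_reach hL'] at hb
  rw [mem_reach hL, if_pos he]
  obtain ⟨hbG, hb⟩ := hb
  refine ⟨hbG, ?_⟩
  rw [sh_z, sh_σ, topJ_concat, topI_concat, if_neg (not_even_succ he)] at hb
  simp only [span] at hb ⊢
  have hij := hI.topI_lt_topJ hL
  rcases hb with ⟨henc, hmem⟩ | hge
  · rw [enc_iff] at henc
    have hpσ : p ∈ c.σ := by
      rcases List.mem_append.1 hmem with h | h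
      · exact h
      · simp at h; omega
    by_cases hpj : p = topJ c.σ
    · right; omega
    · left
      have hple : p ≤ topJ c.σ := by omega
      have hpi : p ≤ topI c.σ := hI.mem_le_topI hL hpσ (by omega)
      exact ⟨senc_iff.2 ⟨⟨hpi, hij, by omega⟩, by omega⟩, hpσ⟩
  · right; omega

lemma reach_sh_eq {n : ℕ} {tG : Finset (N × ℕ × ℕ)} {c : Config N}
    (hI : Inv n tG c) (hG : IsGold n tG) (he : Even c.z) (hL : 2 ≤ c.σ.length)
    (hq : ∀ b ∈ leftSet tG c, topJ c.σ < (span b).2) :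
    reach tG (doAct c Action.sh) = reach tG c := by
  refine Finset.Subset.antisymm (reach_sh_subset hI he hL) ?_
  intro b hb
  obtain ⟨Y, p, q⟩ := b
  have hL' : 2 ≤ (doAct c Action.sh).σ.length := by rw [sh_len]; omega
  rw [mem_reach hL']
  rw [mem_reach hL, if_pos he] at hb
  obtain ⟨hbG, hb⟩ := hb
  refine ⟨hbG, ?_⟩
  rw [sh_z, sh_σ, topJ_concat, topI_concat, if_neg (not_even_succ he)]
  simp only [span] at hb ⊢
  have hij := hI.topI_lt_topJ hL
  have hpq : p < q := (hG.validSpans _ hbG).1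
  rcases hb with ⟨henc, hmem⟩ | hge
  · have hqj : topJ c.σ < q := by
      have := hq (Y, p, q) (mem_leftSet.2 ⟨hbG, by rw [if_pos he]; exact ⟨henc, hmem⟩⟩)
      simpa [span] using this
    rw [senc_iff] at henc
    left
    exact ⟨⟨by omega, by omega, by omega⟩, List.mem_append_left _ hmem⟩
  · by_cases hpj : p = topJ c.σ
    · left
      refine ⟨⟨by omega, by omega, by omega⟩, ?_⟩
      exact List.mem_append_left _ (by rw [hpj]; exact topJ_mem hI.ne)
    · right; omega

/- #### reach evolution: combine -/

lemma comb_tops {n : ℕ} {tG : Finset (N × ℕ × ℕ)} {c : Config N}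
    (hI : Inv n tG c) (hL3 : 3 ≤ c.σ.length) :
    topJ (doAct c Action.comb).σ = topJ c.σ ∧
    topI (doAct c Action.comb).σ = topJ c.σ.dropLast.dropLast ∧
    topJ c.σ.dropLast.dropLast < topI c.σ := by
  have e1 := c.σ.length_dropLast
  have e2 := c.σ.dropLast.length_dropLast
  have hd : c.σ.dropLast.dropLast ≠ [] := by
    intro h; rw [h] at e2; simp at e2; omega
  refine ⟨by rw [comb_σ, topJ_concat], by rw [comb_σ, topI_concat], ?_⟩
  exact (hI.d_facts (by omega)).2.1 _ (topJ_mem hd)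

lemma mem_d_subset {c : Config N} : ∀ x ∈ c.σ.dropLast.dropLast, x ∈ c.σ :=
  fun x hx => List.dropLast_subset _ (List.dropLast_subset _ hx)

lemma reach_comb_subset {n : ℕ} {tG : Finset (N × ℕ × ℕ)} {c : Config N}
    (hI : Inv n tG c) (he : Even c.z) (hL3 : 3 ≤ c.σ.length) :
    reach tG (doAct c Action.comb) ⊆ reach tG c := by
  obtain ⟨hj', hi', hk⟩ := comb_tops hI hL3
  intro b hb
  obtain ⟨Y, p, q⟩ := b
  have hL' : 2 ≤ (doAct c Action.comb).σ.length := by rw [comb_len _ (by omega)]; omega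
  rw [mem_reach hL'] at hb
  rw [mem_reach (by omega : 2 ≤ c.σ.length), if_pos he]
  obtain ⟨hbG, hb⟩ := hb
  refine ⟨hbG, ?_⟩
  rw [comb_z, if_neg (not_even_succ he), hj', hi'] at hb
  simp only [span] at hb ⊢
  have hij := hI.topI_lt_topJ (by omega)
  rcases hb with ⟨henc, hmem⟩ | hge
  · rw [enc_iff] at henc
    left
    have hpσ : p ∈ c.σ := by
      rw [comb_σ] at hmem
      rcases List.mem_append.1 hmem with h | h
      · exact mem_d_subset p h
      · simp at h; rw [h]; exact topJ_mem hI.ne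
    have hpk : p ≤ topJ c.σ.dropLast.dropLast := henc.1
    exact ⟨senc_iff.2 ⟨⟨by omega, hij, henc.2.2⟩, by omega⟩, hpσ⟩
  · right; omega

lemma reach_comb_eq {n : ℕ} {tG : Finset (N × ℕ × ℕ)} {c : Config N}
    (hI : Inv n tG c) (he : Even c.z) (hL3 : 3 ≤ c.σ.length)
    (hp : ∀ b ∈ leftSet tG c, (span b).1 < topI c.σ) :
    reach tG (doAct c Action.comb) = reach tG c := by
  obtain ⟨hj', hi', hk⟩ := comb_tops hI hL3
  refine Finset.Subset.antisymm (reach_comb_subset hI he hL3) ?_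
  intro b hb
  obtain ⟨Y, p, q⟩ := b
  have hL' : 2 ≤ (doAct c Action.comb).σ.length := by rw [comb_len _ (by omega)]; omega
  rw [mem_reach (by omega : 2 ≤ c.σ.length), if_pos he] at hb
  rw [mem_reach hL']
  obtain ⟨hbG, hb⟩ := hb
  refine ⟨hbG, ?_⟩
  rw [comb_z, if_neg (not_even_succ he), hj', hi']
  simp only [span] at hb ⊢
  have hij := hI.topI_lt_topJ (by omega)
  rcases hb with ⟨henc, hmem⟩ | hge
  · left
    have hpi : p < topI c.σ := by
      have := hp (Y, p, q) (mem_leftSet.2 ⟨hbG, by rw [if_pos he]; exact ⟨henc, hmem⟩⟩)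
      simpa [span] using this
    have hpd : p ∈ c.σ.dropLast.dropLast := hI.lt_topI_mem (by omega) hmem hpi
    have hpk : p ≤ topJ c.σ.dropLast.dropLast :=
      sorted_mem_le_topJ (hI.d_facts (by omega)).2.2 hpd
    rw [senc_iff] at henc
    refine ⟨⟨hpk, by omega, by omega⟩, ?_⟩
    rw [comb_σ]
    exact List.mem_append_left _ hpd
  · right; omega

/- #### reach evolution: label steps -/

lemma mem_reach_odd_succ {n : ℕ} {tG : Finset (N × ℕ × ℕ)} {c : Config N}
    (hI : Inv n tG c) (ho : ¬ Even c.z) (t' : Finset (N × ℕ × ℕ)) {b : N × ℕ × ℕ} :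
    b ∈ reach tG (Config.mk (c.z + 1) c.σ t') ↔
      b ∈ reach tG c ∧ span b ≠ (topI c.σ, topJ c.σ) := by
  have hL := hI.odd_len ho
  have hij := hI.topI_lt_topJ hL
  obtain ⟨Y, p, q⟩ := b
  rw [mem_reach (c := Config.mk (c.z + 1) c.σ t') hL, mem_reach hL,
    if_neg ho, if_pos (even_succ_of_odd ho)]
  simp only [span, senc_iff, enc_iff, ne_eq, Prod.mk.injEq]
  constructor
  · rintro ⟨hbG, ⟨⟨he, hne⟩, hm⟩ | hge⟩
    · exact ⟨⟨hbG, Or.inl ⟨he, hm⟩⟩, by tauto⟩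
    · exact ⟨⟨hbG, Or.inr hge⟩, by omega⟩
  · rintro ⟨⟨hbG, ⟨he, hm⟩ | hge⟩, hne⟩
    · exact ⟨hbG, Or.inl ⟨⟨he, by tauto⟩, hm⟩⟩
    · exact ⟨hbG, Or.inr hge⟩

/- #### Invariant preservation -/

lemma head?_concat {α : Type*} {l : List α} (h : l ≠ []) (l' : List α) :
    (l ++ l').head? = l.head? := by
  cases l with
  | nil => exact absurd rfl h
  | cons a t => rfl

lemma label_shape (c : Config N) (X : N) :
    doAct c (Action.label X) = Config.mk (c.z + 1) c.σ (insert (X, topI c.σ, topJ c.σ) c.t) := rfl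

lemma nolabel_shape (c : Config N) :
    doAct c Action.nolabel = Config.mk (c.z + 1) c.σ c.t := rfl

lemma inv_step {n : ℕ} {tG : Finset (N × ℕ × ℕ)} {c : Config N}
    (hI : Inv n tG c) {a : Action N} (ha : App n c a) : Inv n tG (doAct c a) := by
  cases a with
  | sh =>
    obtain ⟨he, hne, hjn⟩ := ha
    have hmem : ∀ x ∈ c.σ, x < topJ c.σ + 1 := fun x hx =>
      Nat.lt_succ_of_le (hI.mem_le_topJ hx)
    refine ⟨by simp [sh_σ], ?_, ?_, ?_, ?_, ?_, hI.tvalid, ?_⟩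
    · rw [sh_σ]
      exact List.pairwise_append.2 ⟨hI.sorted, by simp, by
        intro x hx y hy; simp at hy; subst hy; exact hmem x hx⟩
    · rw [sh_σ, head?_concat hI.ne]; exact hI.head0
    · rw [sh_σ]
      intro x hx
      rcases List.mem_append.1 hx with h | h
      · exact hI.le_n x h
      · simp at h; omega
    · have hz := hI.zval
      rw [if_pos he] at hz
      rw [sh_z, sh_σ, topJ_concat, if_neg (not_even_succ he)]
      simp only [List.length_append, List.length_cons, List.length_nil]
      omega
    · intro b hb hb'
      by_cases hL : 2 ≤ c.σ.length
      · exact hI.treach b hb (reach_sh_subset hI he hL hb')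
      · have h0 := (hI.σ_len1 (by omega)).2.2
        rw [sh_t, h0] at hb; simp at hb
    · intro b hb
      have hts := hI.tspan b hb
      have h1 := hts.1
      rw [sh_σ, sh_z, topJ_concat, topI_concat, if_neg (not_even_succ he)]
      exact ⟨by omega, fun hq => by omega⟩
  | comb =>
    obtain ⟨he, hL3⟩ := ha
    obtain ⟨hij, hdlt, hdpair⟩ := hI.d_facts (by omega)
    obtain ⟨hj', hi', hk⟩ := comb_tops hI hL3
    have hd : c.σ.dropLast.dropLast ≠ [] := by
      have e1 := c.σ.length_dropLast
      have e2 := c.σ.dropLast.length_dropLast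
      intro h; rw [h] at e2; simp at e2; omega
    refine ⟨by simp [comb_σ], ?_, ?_, ?_, ?_, ?_, hI.tvalid, ?_⟩
    · rw [comb_σ]
      exact List.pairwise_append.2 ⟨hdpair, by simp, by
        intro x hx y hy; simp at hy; subst hy; exact lt_trans (hdlt x hx) hij⟩
    · rw [comb_σ, head?_concat hd]
      have h0 := hI.head0
      rw [hI.decomp (by omega), head?_concat hd] at h0
      exact h0
    · rw [comb_σ]
      intro x hx
      rcases List.mem_append.1 hx with h | h
      · exact hI.le_n x (mem_d_subset x h)
      · simp at h; subst h; exact hI.topJ_le_n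
    · have hz := hI.zval
      rw [if_pos he] at hz
      rw [comb_z, comb_len _ (by omega), hj', if_neg (not_even_succ he)]
      omega
    · intro b hb hb'
      exact hI.treach b hb (reach_comb_subset hI he hL3 hb')
    · intro b hb
      have hts := hI.tspan b hb
      rw [if_pos he] at hts
      rw [hj', comb_z, if_neg (not_even_succ he), hi']
      exact ⟨hts.1, fun hq => lt_of_lt_of_le hk (hts.2 hq)⟩
  | label X =>
    obtain ⟨ho', hL⟩ := ha
    have ho : ¬ Even c.z := Nat.not_even_iff_odd.2 ho'
    have hij := hI.topI_lt_topJ hL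
    refine ⟨hI.ne, hI.sorted, hI.head0, hI.le_n, ?_, ?_, ?_, ?_⟩
    · have hz := hI.zval
      rw [if_neg ho] at hz
      rw [label_shape]
      simp only []
      rw [if_pos (even_succ_of_odd ho)]
      omega
    · intro b hb hb'
      rw [label_shape] at hb hb'
      simp only [Finset.mem_insert] at hb
      rw [mem_reach_odd_succ hI ho] at hb'
      rcases hb with rfl | hb
      · exact hb'.2 rfl
      · exact hI.treach b hb hb'.1
    · intro b hb
      rw [label_shape] at hb
      simp only [Finset.mem_insert] at hb
      rcases hb with rfl | hb
      · simpa [span] using hij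
      · exact hI.tvalid b hb
    · intro b hb
      rw [label_shape] at hb
      simp only [Finset.mem_insert] at hb
      rw [label_shape]
      simp only []
      rw [if_pos (even_succ_of_odd ho)]
      rcases hb with rfl | hb
      · exact ⟨le_refl _, fun _ => le_refl _⟩
      · have hts := hI.tspan b hb
        rw [if_neg ho] at hts
        exact ⟨hts.1, fun hq => le_of_lt (hts.2 hq)⟩
  | nolabel =>
    obtain ⟨ho', hL, hzlt⟩ := ha
    have ho : ¬ Even c.z := Nat.not_even_iff_odd.2 ho'
    refine ⟨hI.ne, hI.sorted, hI.head0, hI.le_n, ?_, ?_, hI.tvalid, ?_⟩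
    · have hz := hI.zval
      rw [if_neg ho] at hz
      rw [nolabel_shape]
      simp only []
      rw [if_pos (even_succ_of_odd ho)]
      omega
    · intro b hb hb'
      rw [nolabel_shape] at hb hb'
      rw [mem_reach_odd_succ hI ho] at hb'
      exact hI.treach b hb hb'.1
    · intro b hb
      rw [nolabel_shape] at hb
      have hts := hI.tspan b hb
      rw [if_neg ho] at hts
      rw [nolabel_shape]
      simp only []
      rw [if_pos (even_succ_of_odd ho)]
      exact ⟨hts.1, fun hq => le_of_lt (hts.2 hq)⟩

lemma inv_init (n : ℕ) (tG : Finset (N × ℕ × ℕ)) : Inv n tG (initial N) := by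
  refine ⟨by simp [initial], by simp [initial], by simp [initial], ?_, ?_, ?_, ?_, ?_⟩
  · intro x hx; simp [initial] at hx; omega
  · simp [initial, topJ]
  · intro b hb; simp [initial] at hb
  · intro b hb; simp [initial] at hb
  · intro b hb; simp [initial] at hb

lemma inv_of_valid {n : ℕ} {tG : Finset (N × ℕ × ℕ)} {c : Config N}
    (hv : Valid n c) : Inv n tG c := by
  induction hv with
  | refl => exact inv_init n tG
  | tail h step ih =>
    obtain ⟨a, ha, rfl⟩ := step
    exact inv_step ih ha

lemma inv_reaches {n : ℕ} {tG : Finset (N × ℕ × ℕ)} {c c' : Config N}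
    (hI : Inv n tG c) (h : Reaches n c c') : Inv n tG c' := by
  induction h with
  | refl => exact hI
  | tail h step ih =>
    obtain ⟨a, ha, rfl⟩ := step
    exact inv_step ih ha

/- #### next: existence and facts -/

lemma root_mem_leftSet {n : ℕ} {tG : Finset (N × ℕ × ℕ)} {c : Config N}
    (hI : Inv n tG c) (hG : IsGold n tG) (he : Even c.z)
    (hL : 2 ≤ c.σ.length) (hnf : ¬ Final n c) : ∃ X, (X, 0, n) ∈ leftSet tG c := by
  obtain ⟨X, hX⟩ := hG.root
  refine ⟨X, mem_leftSet.2 ⟨hX, ?_, ?_⟩⟩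
  · rw [if_pos he]
    have hij := hI.topI_lt_topJ hL
    have hjn := hI.topJ_le_n
    refine senc_iff.2 ⟨⟨Nat.zero_le _, hij, hjn⟩, ?_⟩
    rintro ⟨h1, h2⟩
    exact hnf (hI.final_of_top he hL h1 h2)
  · exact hI.zero_mem

lemma next_exists {n : ℕ} {tG : Finset (N × ℕ × ℕ)} {c : Config N}
    (hI : Inv n tG c) (hG : IsGold n tG) (he : Even c.z)
    (hL : 2 ≤ c.σ.length) (hnf : ¬ Final n c) : ∃ b, IsNext tG c b := by
  obtain ⟨X, hroot⟩ := root_mem_leftSet hI hG he hL hnf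
  obtain ⟨b₀, hb₀, hmin⟩ := Finset.exists_min_image (leftSet tG c)
    (fun b => (span b).2 - (span b).1) ⟨_, hroot⟩
  refine ⟨b₀, hb₀, ?_⟩
  intro b' hb'
  have hm := hmin b' hb'
  obtain ⟨hb₀G, hb₀e, hb₀m⟩ := mem_leftSet.1 hb₀
  obtain ⟨hb'G, hb'e, hb'm⟩ := mem_leftSet.1 hb'
  rw [if_pos he] at hb₀e hb'e
  have hv0 := hG.validSpans b₀ hb₀G
  have hv1 := hG.validSpans b' hb'G
  rcases hG.noncrossing b₀ hb₀G b' hb'G with h | h | h | h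
  · exact h
  · obtain ⟨Y0, p0, q0⟩ := b₀
    obtain ⟨Y1, p1, q1⟩ := b'
    simp only [span] at *
    rw [senc_iff] at hb₀e hb'e
    rw [enc_iff] at h ⊢
    omega
  · obtain ⟨Y0, p0, q0⟩ := b₀
    obtain ⟨Y1, p1, q1⟩ := b'
    simp only [span] at *
    rw [senc_iff] at hb₀e hb'e
    rw [enc_iff]
    omega
  · obtain ⟨Y0, p0, q0⟩ := b₀
    obtain ⟨Y1, p1, q1⟩ := b'
    simp only [span] at *
    rw [senc_iff] at hb₀e hb'e
    rw [enc_iff]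
    omega

lemma next_facts {n : ℕ} {tG : Finset (N × ℕ × ℕ)} {c : Config N}
    (hI : Inv n tG c) (hG : IsGold n tG) (he : Even c.z) {b : N × ℕ × ℕ}
    (hnx : IsNext tG c b) :
    b ∈ tG ∧ (span b).1 ∈ c.σ ∧ (span b).1 ≤ topI c.σ ∧ topJ c.σ ≤ (span b).2 ∧
      ¬((span b).1 = topI c.σ ∧ (span b).2 = topJ c.σ) ∧ (span b).2 ≤ n := by
  obtain ⟨hbl, _⟩ := hnx
  obtain ⟨hbG, hbe, hbm⟩ := mem_leftSet.1 hbl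
  rw [if_pos he] at hbe
  have hv := (hG.validSpans b hbG).2
  obtain ⟨Y, p, q⟩ := b
  simp only [span] at hbe hbm hv ⊢
  obtain ⟨⟨h1, h2, h3⟩, h4⟩ := senc_iff.1 hbe
  exact ⟨hbG, hbm, h1, h3, fun ⟨e1, e2⟩ => h4 ⟨e1.symm, e2.symm⟩, hv⟩

lemma len3_of_lt_topI {n : ℕ} {tG : Finset (N × ℕ × ℕ)} {c : Config N}
    (hI : Inv n tG c) (hL : 2 ≤ c.σ.length) {p : ℕ} (hm : p ∈ c.σ)
    (hp : p < topI c.σ) : 3 ≤ c.σ.length := by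
  have hd := hI.lt_topI_mem hL hm hp
  have hne : c.σ.dropLast.dropLast ≠ [] := List.ne_nil_of_mem hd
  have e1 := c.σ.length_dropLast
  have e2 := c.σ.dropLast.length_dropLast
  have := List.length_pos_iff.2 hne
  omega

/- #### Progress and applicability of the oracle -/

lemma progress {n : ℕ} {tG : Finset (N × ℕ × ℕ)} {c : Config N}
    (hI : Inv n tG c) (hG : IsGold n tG) (hn : 1 ≤ n) (hnf : ¬ Final n c) :
    ∃ a, App n c a ∧ Dyna tG c a := by
  by_cases hL : c.σ.length < 2
  · obtain ⟨hσ, hz, ht⟩ := hI.σ_len1 hL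
    refine ⟨Action.sh, ⟨by rw [hz]; exact Even.zero, hI.ne, ?_⟩, ?_⟩
    · rw [hσ]; exact hn
    · unfold Dyna; rw [if_pos hL]
  · push_neg at hL
    by_cases he : Even c.z
    · obtain ⟨b₀, hnx⟩ := next_exists hI hG he hL hnf
      obtain ⟨hbG, hbm, hp, hq, hne, hqn⟩ := next_facts hI hG he hnx
      by_cases hpi : (span b₀).1 = topI c.σ
      · have hqj : topJ c.σ < (span b₀).2 := lt_of_le_of_ne hq (by tauto)
        refine ⟨Action.sh, ⟨he, hI.ne, by omega⟩, ?_⟩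
        unfold Dyna; rw [if_neg (by omega), if_pos he]
        exact ⟨b₀, hnx, Or.inl ⟨hpi, hqj, rfl⟩⟩
      · have hpi' : (span b₀).1 < topI c.σ := lt_of_le_of_ne hp hpi
        by_cases hqj : (span b₀).2 = topJ c.σ
        · refine ⟨Action.comb, ⟨he, len3_of_lt_topI hI hL hbm hpi'⟩, ?_⟩
          unfold Dyna; rw [if_neg (by omega), if_pos he]
          exact ⟨b₀, hnx, Or.inr (Or.inl ⟨hpi', hqj, rfl⟩)⟩
        · have hqj' : topJ c.σ < (span b₀).2 := lt_of_le_of_ne hq (Ne.symm hqj)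
          refine ⟨Action.sh, ⟨he, hI.ne, by omega⟩, ?_⟩
          unfold Dyna; rw [if_neg (by omega), if_pos he]
          exact ⟨b₀, hnx, Or.inr (Or.inr ⟨hpi', hqj', Or.inl rfl⟩)⟩
    · have ho : Odd c.z := Nat.not_even_iff_odd.1 he
      have hzb := hI.odd_z_le he
      by_cases hex : ∃ X, (X, topI c.σ, topJ c.σ) ∈ tG
      · obtain ⟨X, hX⟩ := hex
        refine ⟨Action.label X, ⟨ho, hL⟩, ?_⟩
        unfold Dyna; rw [if_neg (by omega), if_neg he]
        exact Or.inl ⟨X, hX, rfl⟩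
      · push_neg at hex
        refine ⟨Action.nolabel, ⟨ho, hL, by omega⟩, ?_⟩
        unfold Dyna; rw [if_neg (by omega), if_neg he]
        exact Or.inr ⟨hex, rfl⟩

lemma app_of_dyna {n : ℕ} {tG : Finset (N × ℕ × ℕ)} {c : Config N} {a : Action N}
    (hI : Inv n tG c) (hG : IsGold n tG) (hn : 1 ≤ n) (hd : Dyna tG c a) :
    App n c a := by
  unfold Dyna at hd
  by_cases hL : c.σ.length < 2
  · rw [if_pos hL] at hd
    subst hd
    obtain ⟨hσ, hz, ht⟩ := hI.σ_len1 hL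
    exact ⟨by rw [hz]; exact Even.zero, hI.ne, by rw [hσ]; exact hn⟩
  · rw [if_neg hL] at hd
    push_neg at hL
    by_cases he : Even c.z
    · rw [if_pos he] at hd
      obtain ⟨b, hnx, hcase⟩ := hd
      obtain ⟨hbG, hbm, hp, hq, hne, hqn⟩ := next_facts hI hG he hnx
      rcases hcase with ⟨h1, h2, rfl⟩ | ⟨h1, h2, rfl⟩ | ⟨h1, h2, h3⟩
      · exact ⟨he, hI.ne, by omega⟩
      · exact ⟨he, len3_of_lt_topI hI hL hbm h1⟩
      · rcases h3 with rfl | rfl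
        · exact ⟨he, hI.ne, by omega⟩
        · exact ⟨he, len3_of_lt_topI hI hL hbm h1⟩
    · rw [if_neg he] at hd
      have ho : Odd c.z := Nat.not_even_iff_odd.1 he
      have hzb := hI.odd_z_le he
      rcases hd with ⟨X, hX, rfl⟩ | ⟨hno, rfl⟩
      · exact ⟨ho, hI.odd_len he⟩
      · exact ⟨ho, hI.odd_len he, by omega⟩

/- #### tstar evolution -/

lemma leftSet_subset_reach {tG : Finset (N × ℕ × ℕ)} {c : Config N}
    (hL : 2 ≤ c.σ.length) : leftSet tG c ⊆ reach tG c := by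
  rw [reach, if_neg (by omega)]
  exact Finset.subset_union_left

lemma top_mem_reach {n : ℕ} {tG : Finset (N × ℕ × ℕ)} {c : Config N}
    (hI : Inv n tG c) (ho : ¬ Even c.z) {Y : N}
    (hY : (Y, topI c.σ, topJ c.σ) ∈ tG) :
    (Y, topI c.σ, topJ c.σ) ∈ reach tG c := by
  have hL := hI.odd_len ho
  rw [mem_reach hL, if_neg ho]
  exact ⟨hY, Or.inl ⟨⟨le_refl _, hI.topI_lt_topJ hL, le_refl _⟩, hI.topI_mem hL⟩⟩

lemma enc_fst {s₁ s₂ : ℕ × ℕ} (h : Enc s₁ s₂) : s₂.1 ≤ s₁.1 := h.1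
lemma enc_snd {s₁ s₂ : ℕ × ℕ} (h : Enc s₁ s₂) : s₁.2 ≤ s₂.2 := h.2.2

lemma leftSet_big_of_next {tG : Finset (N × ℕ × ℕ)} {c : Config N} {b₀ : N × ℕ × ℕ}
    (hnx : IsNext tG c b₀) (hq : topJ c.σ < (span b₀).2) :
    ∀ b ∈ leftSet tG c, topJ c.σ < (span b).2 := fun b hb =>
  lt_of_lt_of_le hq (enc_snd (hnx.2 b hb))

lemma leftSet_small_of_next {tG : Finset (N × ℕ × ℕ)} {c : Config N} {b₀ : N × ℕ × ℕ}
    (hnx : IsNext tG c b₀) (hp : (span b₀).1 < topI c.σ) :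
    ∀ b ∈ leftSet tG c, (span b).1 < topI c.σ := fun b hb =>
  lt_of_le_of_lt (enc_fst (hnx.2 b hb)) hp

lemma reach_sh_low {n : ℕ} {tG : Finset (N × ℕ × ℕ)} {c : Config N}
    (hI : Inv n tG c) (hG : IsGold n tG) (hL : c.σ.length < 2) :
    reach tG (doAct c Action.sh) = reach tG c := by
  obtain ⟨hσ, hz, ht⟩ := hI.σ_len1 hL
  have hσ' : (doAct c Action.sh).σ = [0, 1] := by rw [sh_σ, hσ]; rfl
  have hL' : 2 ≤ (doAct c Action.sh).σ.length := by rw [hσ']; simp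
  refine Finset.Subset.antisymm
    (subset_trans (reach_subset_tG tG _) (by rw [reach, if_pos hL]))
    ?_
  intro b hb
  rw [reach, if_pos hL] at hb
  obtain ⟨Y, p, q⟩ := b
  have hv := hG.validSpans _ hb
  simp only [span] at hv
  rw [mem_reach hL']
  refine ⟨hb, ?_⟩
  rw [hσ']
  have hti : topI [0, 1] = 0 := rfl
  have htj : topJ [0, 1] = 1 := rfl
  rw [hti, htj, if_neg (by rw [sh_z, hz]; decide)]
  simp only [span]
  by_cases hp : p = 0
  · exact Or.inl ⟨⟨by omega, by omega, by omega⟩, by simp [hp]⟩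
  · exact Or.inr (by omega)

lemma tstar_inter_subset {n : ℕ} {tG : Finset (N × ℕ × ℕ)} {c : Config N}
    (hI : Inv n tG c) (hG : IsGold n tG) {a : Action N} (ha : App n c a) :
    tstar tG (doAct c a) ∩ tG ⊆ tstar tG c ∩ tG ∧ c.t ⊆ (doAct c a).t := by
  cases a with
  | sh =>
    obtain ⟨he, hne, hjn⟩ := ha
    refine ⟨?_, by rw [sh_t]⟩
    by_cases hL : 2 ≤ c.σ.length
    · refine Finset.inter_subset_inter ?_ subset_rfl
      unfold tstar
      rw [sh_t]
      exact Finset.union_subset_union subset_rfl (reach_sh_subset hI he hL)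
    · intro b hb
      rw [Finset.mem_inter] at hb ⊢
      refine ⟨?_, hb.2⟩
      unfold tstar
      rw [reach, if_pos (by omega)]
      exact Finset.mem_union_right _ hb.2
  | comb =>
    obtain ⟨he, hL3⟩ := ha
    refine ⟨Finset.inter_subset_inter ?_ subset_rfl, by rw [comb_t]⟩
    unfold tstar
    rw [comb_t]
    exact Finset.union_subset_union subset_rfl (reach_comb_subset hI he hL3)
  | label X =>
    obtain ⟨ho', hL⟩ := ha
    have ho : ¬ Even c.z := Nat.not_even_iff_odd.2 ho'
    refine ⟨?_, by rw [label_shape]; exact Finset.subset_insert _ _⟩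
    intro b hb
    rw [Finset.mem_inter] at hb ⊢
    obtain ⟨hb1, hb2⟩ := hb
    refine ⟨?_, hb2⟩
    unfold tstar at hb1 ⊢
    rw [label_shape] at hb1
    rcases Finset.mem_union.1 hb1 with hb1 | hb1
    · rcases Finset.mem_insert.1 hb1 with rfl | hb1
      · exact Finset.mem_union_right _ (top_mem_reach hI ho hb2)
      · exact Finset.mem_union_left _ hb1
    · rw [mem_reach_odd_succ hI ho] at hb1
      exact Finset.mem_union_right _ hb1.1
  | nolabel =>
    obtain ⟨ho', hL, _⟩ := ha
    have ho : ¬ Even c.z := Nat.not_even_iff_odd.2 ho'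
    refine ⟨Finset.inter_subset_inter ?_ subset_rfl, by rw [nolabel_shape]⟩
    unfold tstar
    rw [nolabel_shape]
    refine Finset.union_subset_union subset_rfl ?_
    intro b hb
    exact ((mem_reach_odd_succ hI ho c.t).1 hb).1

lemma tstar_preserve {n : ℕ} {tG : Finset (N × ℕ × ℕ)} {c : Config N}
    (hI : Inv n tG c) (hG : IsGold n tG) {a : Action N} (ha : App n c a)
    (hd : Dyna tG c a) : tstar tG (doAct c a) = tstar tG c := by
  unfold Dyna at hd
  by_cases hL : c.σ.length < 2
  · rw [if_pos hL] at hd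
    subst hd
    unfold tstar
    rw [sh_t, reach_sh_low hI hG hL]
  · rw [if_neg hL] at hd
    push_neg at hL
    by_cases he : Even c.z
    · rw [if_pos he] at hd
      obtain ⟨b₀, hnx, hcase⟩ := hd
      rcases hcase with ⟨h1, h2, rfl⟩ | ⟨h1, h2, rfl⟩ | ⟨h1, h2, h3⟩
      · unfold tstar
        rw [sh_t, reach_sh_eq hI hG he hL (leftSet_big_of_next hnx h2)]
      · unfold tstar
        rw [comb_t, reach_comb_eq hI he ha.2 (leftSet_small_of_next hnx h1)]
      · rcases h3 with rfl | rfl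
        · unfold tstar
          rw [sh_t, reach_sh_eq hI hG he hL (leftSet_big_of_next hnx h2)]
        · unfold tstar
          rw [comb_t, reach_comb_eq hI he ha.2 (leftSet_small_of_next hnx h1)]
    · rw [if_neg he] at hd
      have hL2 := hI.odd_len he
      have hij := hI.topI_lt_topJ hL2
      rcases hd with ⟨X, hX, rfl⟩ | ⟨hno, rfl⟩
      · -- label X with (X, i, j) ∈ tG
        ext b
        unfold tstar
        rw [label_shape]
        simp only [Finset.mem_union, Finset.mem_insert]
        constructor
        · rintro ((rfl | hb) | hb)
          · exact Or.inr (top_mem_reach hI he hX)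
          · exact Or.inl hb
          · exact Or.inr ((mem_reach_odd_succ hI he _).1 hb).1
        · rintro (hb | hb)
          · exact Or.inl (Or.inr hb)
          · by_cases hsp : span b = (topI c.σ, topJ c.σ)
            · left
              have hbG := reach_subset_tG tG c hb
              have : b = (X, topI c.σ, topJ c.σ) :=
                hG.distinctSpans b hbG _ hX (by rw [hsp]; rfl)
              exact Or.inl this
            · exact Or.inr ((mem_reach_odd_succ hI he _).2 ⟨hb, hsp⟩)
      · -- nolabel, no gold label on (i, j)
        unfold tstar
        rw [nolabel_shape]
        congr 1
        ext b
        rw [mem_reach_odd_succ hI he]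
        constructor
        · exact fun h => h.1
        · intro hb
          refine ⟨hb, ?_⟩
          intro hsp
          have hbG := reach_subset_tG tG c hb
          have hb' : b = (b.1, topI c.σ, topJ c.σ) := by
            obtain ⟨Y, p, q⟩ := b
            simp only [span, Prod.mk.injEq] at hsp
            simp [hsp.1, hsp.2]
          exact hno b.1 (by rw [← hb']; exact hbG)

/- #### Final configurations -/

lemma reach_final {n : ℕ} {tG : Finset (N × ℕ × ℕ)} {c : Config N}
    (hI : Inv n tG c) (hG : IsGold n tG) (hn : 1 ≤ n) (hf : Final n c) :
    reach tG c = ∅ := by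
  obtain ⟨hσ, hz⟩ := hf
  have he : Even c.z := by
    rw [hz]
    have h4 : 4 * n - 2 = 2 * (2 * n - 1) := by omega
    rw [h4]
    exact even_two_mul _
  have hL : 2 ≤ c.σ.length := by rw [hσ]; simp
  have hti : topI c.σ = 0 := by rw [hσ]; rfl
  have htj : topJ c.σ = n := by rw [hσ]; rfl
  rw [Finset.eq_empty_iff_forall_notMem]
  intro b hb
  obtain ⟨Y, p, q⟩ := b
  rw [mem_reach hL, if_pos he, hti, htj] at hb
  obtain ⟨hbG, hb⟩ := hb
  have hv := hG.validSpans _ hbG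
  simp only [span] at hb hv
  rcases hb with ⟨hse, _⟩ | hge
  · rw [senc_iff] at hse; omega
  · omega

lemma reaches_mono {n : ℕ} {tG : Finset (N × ℕ × ℕ)} {c c' : Config N}
    (hI : Inv n tG c) (hG : IsGold n tG) (h : Reaches n c c') :
    tstar tG c' ∩ tG ⊆ tstar tG c ∩ tG ∧ c.t ⊆ c'.t := by
  induction h with
  | refl => exact ⟨subset_rfl, subset_rfl⟩
  | tail hr step ih =>
    obtain ⟨a, ha, rfl⟩ := step
    have hIb := inv_reaches hI hr
    have hm := tstar_inter_subset hIb hG ha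
    exact ⟨subset_trans hm.1 ih.1, subset_trans ih.2 hm.2⟩

lemma doAct_z {c : Config N} (a : Action N) : (doAct c a).z = c.z + 1 := by
  cases a <;> rfl

lemma completion_aux {n : ℕ} {tG : Finset (N × ℕ × ℕ)} (hG : IsGold n tG)
    (hn : 1 ≤ n) (k : ℕ) :
    ∀ c : Config N, Inv n tG c → 4 * n ≤ c.z + k →
      ∃ c', Reaches n c c' ∧ Final n c' ∧ c'.t = tstar tG c := by
  induction k with
  | zero =>
    intro c hI hk
    exact absurd (hI.z_le hn) (by omega)
  | succ k ih =>
    intro c hI hk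
    by_cases hf : Final n c
    · refine ⟨c, Relation.ReflTransGen.refl, hf, ?_⟩
      unfold tstar
      rw [reach_final hI hG hn hf]
      simp
    · obtain ⟨a, ha, hd⟩ := progress hI hG hn hf
      obtain ⟨c', hr, hf', ht⟩ := ih (doAct c a) (inv_step hI ha) (by rw [doAct_z]; omega)
      exact ⟨c', Relation.ReflTransGen.head ⟨a, ha, rfl⟩ hr, hf',
        by rw [ht, tstar_preserve hI hG ha hd]⟩

lemma completion {n : ℕ} {tG : Finset (N × ℕ × ℕ)} {c : Config N}
    (hI : Inv n tG c) (hG : IsGold n tG) (hn : 1 ≤ n) :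
    tstar tG c ∈ Dset n c := by
  obtain ⟨c', hr, hf, ht⟩ := completion_aux hG hn (4 * n) c hI (by omega)
  exact ⟨c', hr, hf, ht⟩

/- #### Strict decrease for non-oracle actions -/

lemma top_not_mem_t {n : ℕ} {tG : Finset (N × ℕ × ℕ)} {c : Config N}
    (hI : Inv n tG c) (ho : ¬ Even c.z) (Y : N) :
    (Y, topI c.σ, topJ c.σ) ∉ c.t := by
  intro hmem
  have hts := hI.tspan _ hmem
  rw [if_neg ho] at hts
  simp only [span] at hts
  have h2 := hts.2
  simp at h2

lemma tstar_strict {n : ℕ} {tG : Finset (N × ℕ × ℕ)} {c : Config N}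
    (hI : Inv n tG c) (hG : IsGold n tG) (hn : 1 ≤ n) (hnf : ¬ Final n c)
    {a : Action N} (ha : App n c a) (hnd : ¬ Dyna tG c a) :
    (tstar tG (doAct c a) ∩ tG ⊂ tstar tG c ∩ tG) ∨
      (c.t \ tG ⊂ (doAct c a).t \ tG) := by
  unfold Dyna at hnd
  by_cases hL : c.σ.length < 2
  · rw [if_pos hL] at hnd
    obtain ⟨hσ, hz, ht⟩ := hI.σ_len1 hL
    exfalso
    cases a with
    | sh => exact hnd rfl
    | comb => have h3 := ha.2; rw [hσ] at h3; simp at h3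
    | label X =>
      have h1 := ha.1
      rw [hz] at h1
      exact (Nat.not_odd_iff_even.2 Even.zero) h1
    | nolabel =>
      have h1 := ha.1
      rw [hz] at h1
      exact (Nat.not_odd_iff_even.2 Even.zero) h1
  · rw [if_neg hL] at hnd
    push_neg at hL
    by_cases he : Even c.z
    · rw [if_pos he] at hnd
      obtain ⟨b₀, hnx⟩ := next_exists hI hG he hL hnf
      obtain ⟨hbG, hbm, hp, hq, hne, hqn⟩ := next_facts hI hG he hnx
      have hij := hI.topI_lt_topJ hL
      have hb₀r : b₀ ∈ reach tG c := leftSet_subset_reach hL hnx.1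
      have hb₀t : b₀ ∉ c.t := fun h => hI.treach b₀ h hb₀r
      have hb₀star : b₀ ∈ tstar tG c ∩ tG :=
        Finset.mem_inter.2 ⟨Finset.mem_union_right _ hb₀r, hbG⟩
      cases a with
      | sh =>
        -- not dyna: must be p < i and q = j
        have hpi : (span b₀).1 < topI c.σ := by
          rcases lt_or_eq_of_le hp with h | h
          · exact h
          · exfalso
            have hqj : topJ c.σ < (span b₀).2 := lt_of_le_of_ne hq (by tauto)
            exact hnd ⟨b₀, hnx, Or.inl ⟨h, hqj, rfl⟩⟩
        have hqj : (span b₀).2 = topJ c.σ := by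
          rcases lt_or_eq_of_le hq with h | h
          · exact absurd ⟨b₀, hnx, Or.inr (Or.inr ⟨hpi, h, Or.inl rfl⟩)⟩ hnd
          · exact h.symm
        left
        rw [Finset.ssubset_iff_of_subset (tstar_inter_subset hI hG ha).1]
        refine ⟨b₀, hb₀star, ?_⟩
        rw [Finset.mem_inter]
        rintro ⟨hmem, -⟩
        rcases Finset.mem_union.1 hmem with h | h
        · rw [sh_t] at h; exact hb₀t h
        · have hL' : 2 ≤ (doAct c Action.sh).σ.length := by rw [sh_len]; omega
          rw [mem_reach hL', sh_z, sh_σ, topJ_concat, topI_concat,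
            if_neg (not_even_succ he)] at h
          obtain ⟨Y, p, q⟩ := b₀
          simp only [span] at *
          rcases h.2 with ⟨henc, _⟩ | hge
          · rw [enc_iff] at henc; omega
          · omega
      | comb =>
        have hL3 := ha.2
        obtain ⟨hj', hi', hk⟩ := comb_tops hI hL3
        -- not dyna: must be p = i and q > j
        have hqj : topJ c.σ < (span b₀).2 := by
          rcases lt_or_eq_of_le hq with h | h
          · exact h
          · exfalso
            have hpi : (span b₀).1 < topI c.σ := lt_of_le_of_ne hp (by tauto)
            exact hnd ⟨b₀, hnx, Or.inr (Or.inl ⟨hpi, h.symm, rfl⟩)⟩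
        have hpi : (span b₀).1 = topI c.σ := by
          rcases lt_or_eq_of_le hp with h | h
          · exact absurd ⟨b₀, hnx, Or.inr (Or.inr ⟨h, hqj, Or.inr rfl⟩)⟩ hnd
          · exact h
        left
        rw [Finset.ssubset_iff_of_subset (tstar_inter_subset hI hG ha).1]
        refine ⟨b₀, hb₀star, ?_⟩
        rw [Finset.mem_inter]
        rintro ⟨hmem, -⟩
        rcases Finset.mem_union.1 hmem with h | h
        · rw [comb_t] at h; exact hb₀t h
        · have hL' : 2 ≤ (doAct c Action.comb).σ.length := by
            rw [comb_len _ (by omega)]; omega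
          rw [mem_reach hL', comb_z, if_neg (not_even_succ he), hj', hi'] at h
          have hiσ' : topI c.σ ∉ (doAct c Action.comb).σ := by
            rw [comb_σ]
            intro hmem'
            rcases List.mem_append.1 hmem' with h' | h'
            · exact absurd ((hI.d_facts hL).2.1 _ h') (by omega)
            · simp at h'; omega
          obtain ⟨Y, p, q⟩ := b₀
          simp only [span] at *
          rcases h.2 with ⟨henc, hm⟩ | hge
          · rw [hpi] at hm; exact hiσ' hm
          · omega
      | label X => exact absurd ha.1 (Nat.not_odd_iff_even.2 he)
      | nolabel => exact absurd ha.1 (Nat.not_odd_iff_even.2 he)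
    · rw [if_neg he] at hnd
      have hL2 := hI.odd_len he
      have hij := hI.topI_lt_topJ hL2
      cases a with
      | sh =>
        obtain ⟨he', _⟩ := ha
        exact absurd he' he
      | comb =>
        obtain ⟨he', _⟩ := ha
        exact absurd he' he
      | label Y =>
        have hYG : (Y, topI c.σ, topJ c.σ) ∉ tG := by
          intro hmem
          exact hnd (Or.inl ⟨Y, hmem, rfl⟩)
        have hYt : (Y, topI c.σ, topJ c.σ) ∉ c.t := top_not_mem_t hI he Y
        right
        rw [label_shape]
        refine Finset.ssubset_iff_of_subset
          (Finset.sdiff_subset_sdiff (Finset.subset_insert _ _) subset_rfl) |>.2 ?_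
        refine ⟨(Y, topI c.σ, topJ c.σ), ?_, ?_⟩
        · rw [Finset.mem_sdiff]
          exact ⟨Finset.mem_insert_self _ _, hYG⟩
        · rw [Finset.mem_sdiff]
          rintro ⟨h1, -⟩
          exact hYt h1
      | nolabel =>
        have hex : ∃ X, (X, topI c.σ, topJ c.σ) ∈ tG := by
          by_contra hno
          push_neg at hno
          exact hnd (Or.inr ⟨fun X => hno X, rfl⟩)
        obtain ⟨X, hX⟩ := hex
        have hb₀r : (X, topI c.σ, topJ c.σ) ∈ reach tG c := top_mem_reach hI he hX
        left
        rw [Finset.ssubset_iff_of_subset (tstar_inter_subset hI hG ha).1]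
        refine ⟨(X, topI c.σ, topJ c.σ),
          Finset.mem_inter.2 ⟨Finset.mem_union_right _ hb₀r, hX⟩, ?_⟩
        rw [Finset.mem_inter]
        rintro ⟨hmem, -⟩
        rcases Finset.mem_union.1 hmem with h | h
        · rw [nolabel_shape] at h
          exact top_not_mem_t hI he X h
        · rw [nolabel_shape] at h
          have := ((mem_reach_odd_succ hI he c.t).1 h).2
          exact this rfl

/- #### F1 arithmetic -/

lemma f1_nonneg (tG t' : Finset (N × ℕ × ℕ)) : 0 ≤ f1 tG t' := by
  rw [f1]
  split
  · exact le_refl 0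
  · apply div_nonneg
    · positivity
    · positivity

lemma f1_formula {tG t' : Finset (N × ℕ × ℕ)} (h : (t' ∩ tG).Nonempty) :
    f1 tG t' = 2 * ((t' ∩ tG).card : ℝ) / ((tG.card : ℝ) + (t'.card : ℝ)) := by
  have hne : t' ∩ tG ≠ ∅ := Finset.nonempty_iff_ne_empty.1 h
  have ha : 0 < (((t' ∩ tG).card : ℕ) : ℝ) :=
    Nat.cast_pos.2 (Finset.card_pos.2 h)
  have hg : 0 < ((tG.card : ℕ) : ℝ) := by
    refine Nat.cast_pos.2 (Finset.card_pos.2 ?_)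
    obtain ⟨x, hx⟩ := h
    exact ⟨x, (Finset.mem_inter.1 hx).2⟩
  have hs : 0 < ((t'.card : ℕ) : ℝ) := by
    refine Nat.cast_pos.2 (Finset.card_pos.2 ?_)
    obtain ⟨x, hx⟩ := h
    exact ⟨x, (Finset.mem_inter.1 hx).1⟩
  rw [f1, if_neg hne]
  have hd : ((t' ∩ tG).card : ℝ) / (tG.card : ℝ) + ((t' ∩ tG).card : ℝ) / (t'.card : ℝ) ≠ 0 := by
    positivity
  have hgs : ((tG.card : ℝ) + (t'.card : ℝ)) ≠ 0 := by positivity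
  field_simp
  ring

lemma f1_pos {tG t' : Finset (N × ℕ × ℕ)} (h : (t' ∩ tG).Nonempty) : 0 < f1 tG t' := by
  rw [f1_formula h]
  have ha : 0 < (((t' ∩ tG).card : ℕ) : ℝ) := Nat.cast_pos.2 (Finset.card_pos.2 h)
  have hg : 0 < ((tG.card : ℕ) : ℝ) := by
    refine Nat.cast_pos.2 (Finset.card_pos.2 ?_)
    obtain ⟨x, hx⟩ := h
    exact ⟨x, (Finset.mem_inter.1 hx).2⟩
  have hs : 0 < ((t'.card : ℕ) : ℝ) := by
    refine Nat.cast_pos.2 (Finset.card_pos.2 ?_)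
    obtain ⟨x, hx⟩ := h
    exact ⟨x, (Finset.mem_inter.1 hx).1⟩
  positivity

lemma frac_le {g a1 a2 e1 e2 : ℝ} (hg : 0 < g) (h1 : 0 ≤ a1) (h12 : a1 ≤ a2)
    (he : e2 ≤ e1) (he2 : 0 ≤ e2) :
    2 * a1 / (g + (a1 + e1)) ≤ 2 * a2 / (g + (a2 + e2)) := by
  have hd1 : 0 < g + (a1 + e1) := by linarith
  have hd2 : 0 < g + (a2 + e2) := by linarith
  rw [div_le_div_iff₀ hd1 hd2]
  nlinarith [mul_le_mul_of_nonneg_right h12 (le_of_lt hg),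
    mul_le_mul_of_nonneg_right h12 he2,
    mul_le_mul_of_nonneg_left he (by linarith : (0:ℝ) ≤ a2)]

lemma frac_lt {g a1 a2 e1 e2 : ℝ} (hg : 0 < g) (h1 : 0 ≤ a1) (h12 : a1 ≤ a2)
    (ha2 : 0 < a2) (he : e2 ≤ e1) (he2 : 0 ≤ e2) (hst : a1 < a2 ∨ e2 < e1) :
    2 * a1 / (g + (a1 + e1)) < 2 * a2 / (g + (a2 + e2)) := by
  have hd1 : 0 < g + (a1 + e1) := by linarith
  have hd2 : 0 < g + (a2 + e2) := by linarith
  rw [div_lt_div_iff₀ hd1 hd2]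
  rcases hst with h | h
  · nlinarith [mul_le_mul_of_nonneg_right h12 he2,
      mul_le_mul_of_nonneg_left he (by linarith : (0:ℝ) ≤ a2),
      mul_lt_mul_of_pos_right h hg]
  · nlinarith [mul_le_mul_of_nonneg_right h12 (le_of_lt hg),
      mul_le_mul_of_nonneg_right h12 he2,
      mul_lt_mul_of_pos_left h ha2]

lemma f1_le_f1 {tG t1 t2 : Finset (N × ℕ × ℕ)}
    (hsub : (t1 ∩ tG).card ≤ (t2 ∩ tG).card)
    (hdiff : (t2 \ tG).card ≤ (t1 \ tG).card) :
    f1 tG t1 ≤ f1 tG t2 := by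
  rcases Finset.eq_empty_or_nonempty (t1 ∩ tG) with h1 | h1
  · rw [f1, if_pos h1]
    exact f1_nonneg tG t2
  · have h2 : (t2 ∩ tG).Nonempty := by
      rw [← Finset.card_pos]
      have := Finset.card_pos.2 h1
      omega
    rw [f1_formula h1, f1_formula h2]
    have hc1 := Finset.card_inter_add_card_sdiff t1 tG
    have hc2 := Finset.card_inter_add_card_sdiff t2 tG
    have hg : 0 < ((tG.card : ℕ) : ℝ) := by
      refine Nat.cast_pos.2 (Finset.card_pos.2 ?_)
      obtain ⟨x, hx⟩ := h1
      exact ⟨x, (Finset.mem_inter.1 hx).2⟩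
    have e1 : (t1.card : ℝ) = ((t1 ∩ tG).card : ℝ) + ((t1 \ tG).card : ℝ) := by
      push_cast [← hc1]; ring
    have e2 : (t2.card : ℝ) = ((t2 ∩ tG).card : ℝ) + ((t2 \ tG).card : ℝ) := by
      push_cast [← hc2]; ring
    rw [e1, e2]
    exact frac_le hg (by positivity) (by exact_mod_cast hsub) (by exact_mod_cast hdiff)
      (by positivity)

lemma f1_lt_f1 {tG t1 t2 : Finset (N × ℕ × ℕ)}
    (h2 : (t2 ∩ tG).Nonempty)
    (hsub : (t1 ∩ tG).card ≤ (t2 ∩ tG).card)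
    (hdiff : (t2 \ tG).card ≤ (t1 \ tG).card)
    (hst : (t1 ∩ tG).card < (t2 ∩ tG).card ∨ (t2 \ tG).card < (t1 \ tG).card) :
    f1 tG t1 < f1 tG t2 := by
  rcases Finset.eq_empty_or_nonempty (t1 ∩ tG) with h1 | h1
  · rw [f1, if_pos h1]
    exact f1_pos h2
  · rw [f1_formula h1, f1_formula h2]
    have hc1 := Finset.card_inter_add_card_sdiff t1 tG
    have hc2 := Finset.card_inter_add_card_sdiff t2 tG
    have hg : 0 < ((tG.card : ℕ) : ℝ) := by
      refine Nat.cast_pos.2 (Finset.card_pos.2 ?_)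
      obtain ⟨x, hx⟩ := h1
      exact ⟨x, (Finset.mem_inter.1 hx).2⟩
    have e1 : (t1.card : ℝ) = ((t1 ∩ tG).card : ℝ) + ((t1 \ tG).card : ℝ) := by
      push_cast [← hc1]; ring
    have e2 : (t2.card : ℝ) = ((t2 ∩ tG).card : ℝ) + ((t2 \ tG).card : ℝ) := by
      push_cast [← hc2]; ring
    rw [e1, e2]
    refine frac_lt hg (by positivity) (by exact_mod_cast hsub) ?_
      (by exact_mod_cast hdiff) (by positivity) ?_
    · exact_mod_cast Finset.card_pos.2 h2
    · rcases hst with h | h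
      · exact Or.inl (by exact_mod_cast h)
      · exact Or.inr (by exact_mod_cast h)

/- #### configF1 characterization -/

lemma tstar_sdiff (tG : Finset (N × ℕ × ℕ)) (c : Config N) :
    tstar tG c \ tG = c.t \ tG := by
  unfold tstar
  ext b
  simp only [Finset.mem_sdiff, Finset.mem_union]
  constructor
  · rintro ⟨h1 | h1, h2⟩
    · exact ⟨h1, h2⟩
    · exact absurd (reach_subset_tG tG c h1) h2
  · rintro ⟨h1, h2⟩
    exact ⟨Or.inl h1, h2⟩

lemma root_mem_reach {n : ℕ} {tG : Finset (N × ℕ × ℕ)} {c : Config N}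
    (hI : Inv n tG c) (hG : IsGold n tG) (hnf : ¬ Final n c) :
    ∃ X, (X, 0, n) ∈ reach tG c := by
  by_cases hL : c.σ.length < 2
  · obtain ⟨X, hX⟩ := hG.root
    exact ⟨X, (mem_reach_low hL).2 hX⟩
  · push_neg at hL
    by_cases he : Even c.z
    · obtain ⟨X, hX⟩ := root_mem_leftSet hI hG he hL hnf
      exact ⟨X, leftSet_subset_reach hL hX⟩
    · obtain ⟨X, hX⟩ := hG.root
      refine ⟨X, ?_⟩
      rw [mem_reach hL, if_neg he]
      refine ⟨hX, Or.inl ⟨?_, hI.zero_mem⟩⟩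
      exact ⟨Nat.zero_le _, hI.topI_lt_topJ hL, hI.topJ_le_n⟩

lemma tstar_inter_nonempty {n : ℕ} {tG : Finset (N × ℕ × ℕ)} {c : Config N}
    (hI : Inv n tG c) (hG : IsGold n tG) (hnf : ¬ Final n c) :
    (tstar tG c ∩ tG).Nonempty := by
  obtain ⟨X, hX⟩ := root_mem_reach hI hG hnf
  exact ⟨(X, 0, n), Finset.mem_inter.2
    ⟨Finset.mem_union_right _ hX, reach_subset_tG tG c hX⟩⟩

lemma isGreatest_f1 {n : ℕ} {tG : Finset (N × ℕ × ℕ)} {c : Config N}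
    (hI : Inv n tG c) (hG : IsGold n tG) (hn : 1 ≤ n) :
    IsGreatest (f1 tG '' Dset n c) (f1 tG (tstar tG c)) := by
  constructor
  · exact ⟨tstar tG c, completion hI hG hn, rfl⟩
  · rintro x ⟨t'', ⟨c'', hr, hf, rfl⟩, rfl⟩
    have hI'' := inv_reaches hI hr
    have hmono := reaches_mono hI hG hr
    have hfin : tstar tG c'' = c''.t := by
      unfold tstar
      rw [reach_final hI'' hG hn hf]
      simp
    apply f1_le_f1
    · apply Finset.card_le_card
      rw [← hfin]
      exact hmono.1
    · rw [tstar_sdiff tG c]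
      apply Finset.card_le_card
      exact Finset.sdiff_subset_sdiff hmono.2 subset_rfl

lemma configF1_eq {n : ℕ} {tG : Finset (N × ℕ × ℕ)} {c : Config N}
    (hI : Inv n tG c) (hG : IsGold n tG) (hn : 1 ≤ n) :
    configF1 n tG c = f1 tG (tstar tG c) :=
  (isGreatest_f1 hI hG hn).csSup_eq

end Aux


/-- Theorem 2 (main result): the dynamic-oracle policy coincides with the
abstract F1-optimal oracle: `τ ∈ dyna(c)` iff `τ` is applicable at `c` and
`F1(τ(c)) = F1(c)`. -/
theorem dyna_eq_oracle (n : ℕ) (hn : 1 ≤ n) (tG : Finset (N × ℕ × ℕ))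
    (hG : IsGold n tG) (c : Config N) (hc : Valid n c) (hnf : ¬ Final n c)
    (a : Action N) :
    Dyna tG c a ↔ (App n c a ∧ configF1 n tG (doAct c a) = configF1 n tG c) := by
  have hI : Inv n tG c := inv_of_valid hc
  constructor
  · intro hd
    have ha := app_of_dyna hI hG hn hd
    refine ⟨ha, ?_⟩
    rw [configF1_eq (inv_step hI ha) hG hn, configF1_eq hI hG hn,
      tstar_preserve hI hG ha hd]
  · rintro ⟨ha, heq⟩
    by_contra hnd
    have hI' := inv_step hI ha
    have hmono := tstar_inter_subset hI hG ha
    have hstrict := tstar_strict hI hG hn hnf ha hnd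
    have hne := tstar_inter_nonempty hI hG hnf
    have hlt : f1 tG (tstar tG (doAct c a)) < f1 tG (tstar tG c) := by
      apply f1_lt_f1 hne
      · exact Finset.card_le_card hmono.1
      · rw [tstar_sdiff, tstar_sdiff]
        exact Finset.card_le_card (Finset.sdiff_subset_sdiff hmono.2 subset_rfl)
      · rcases hstrict with h | h
        · exact Or.inl (Finset.card_lt_card h)
        · right
          rw [tstar_sdiff, tstar_sdiff]
          exact Finset.card_lt_card h
    rw [configF1_eq hI' hG hn, configF1_eq hI hG hn] at heq
    exact absurd heq (ne_of_lt hlt)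

end SpanParser
end

section
/- Every final configuration reachable from the initial configuration has step number exactly 4n − 2; equivalently, every complete parse of a sentence of n words consists of exactly 4n − 2 actions, comprising n shift actions, n − 1 combine actions, and 2n − 1 label-step actions (label-X or nolabel). -/
/-!
Formalization of the span-based Structure/Label transition parsing system of
Cross & Huang (2016), "Span-Based Constituency Parsing with a Structure-Label
System and Provably Optimal Dynamic Oracles".

A configuration is `(z, σ, t)` where `z` is the step number, `σ` the stack of
span boundaries and `t` the set of brackets built so far.  A bracket is a
triple `(X, i, j)` with `X` a nonterminal label and `i < j ≤ n` a span.
-/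

namespace SpanParser

variable {N : Type*}

variable [DecidableEq N]

lemma topJ_append (l : List ℕ) (x : ℕ) : topJ (l ++ [x]) = x := by
  simp [topJ]

/-- Invariant of reachable configurations. -/
def Inv_s8 (c : Config N) : Prop :=
  ∃ S C : ℕ, topJ c.σ = S ∧ c.σ.length + C = 1 + S ∧
    ((Even c.z ∧ c.z = 2 * (S + C)) ∨ (¬ Even c.z ∧ c.z + 1 = 2 * (S + C)))

lemma inv_step_s8 {n : ℕ} {c c' : Config N} (h : Step n c c') (hi : Inv_s8 c) : Inv_s8 c' := by
  obtain ⟨S, C, htop, hlen, hz⟩ := hi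
  obtain ⟨a, happ, rfl⟩ := h
  cases a with
  | sh =>
      obtain ⟨hev, -, -⟩ := happ
      refine ⟨S + 1, C, ?_, ?_, ?_⟩
      · simp [doAct, topJ_append, htop]
      · simp [doAct]; omega
      · obtain ⟨k, hk⟩ := hev
        rcases hz with ⟨-, h2⟩ | ⟨hne, -⟩
        · right
          constructor
          · simp only [doAct, Nat.even_add_one, not_not]
            exact ⟨k, hk⟩
          · simp [doAct]; omega
        · exact absurd ⟨k, hk⟩ hne
  | comb =>
      obtain ⟨hev, hlen3⟩ := happ
      refine ⟨S, C + 1, ?_, ?_, ?_⟩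
      · simp [doAct, topJ_append, htop]
      · simp [doAct]; omega
      · obtain ⟨k, hk⟩ := hev
        rcases hz with ⟨-, h2⟩ | ⟨hne, -⟩
        · right
          constructor
          · simp only [doAct, Nat.even_add_one, not_not]
            exact ⟨k, hk⟩
          · simp [doAct]; omega
        · exact absurd ⟨k, hk⟩ hne
  | label X =>
      obtain ⟨hodd, -⟩ := happ
      obtain ⟨k, hk⟩ := hodd
      refine ⟨S, C, ?_, ?_, ?_⟩
      · simpa [doAct] using htop
      · simpa [doAct] using hlen
      · rcases hz with ⟨hev, -⟩ | ⟨-, h2⟩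
        · exact absurd hev (by simp [hk, parity_simps])
        · left
          constructor
          · simp [doAct, Nat.even_add_one, hk, parity_simps]
          · simp [doAct]; omega
  | nolabel =>
      obtain ⟨hodd, -, -⟩ := happ
      obtain ⟨k, hk⟩ := hodd
      refine ⟨S, C, ?_, ?_, ?_⟩
      · simpa [doAct] using htop
      · simpa [doAct] using hlen
      · rcases hz with ⟨hev, -⟩ | ⟨-, h2⟩
        · exact absurd hev (by simp [hk, parity_simps])
        · left
          constructor
          · simp [doAct, Nat.even_add_one, hk, parity_simps]
          · simp [doAct]; omega

lemma inv_reaches_s8 {n : ℕ} {c : Config N} (h : Reaches n (initial N) c) : Inv_s8 c := by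
  induction h with
  | refl => exact ⟨0, 0, by simp [initial, topJ], by simp [initial], Or.inl ⟨by simp [initial], by simp [initial]⟩⟩
  | tail _ hstep ih => exact inv_step_s8 hstep ih

lemma countP_sum (as : List (Action N)) :
    as.countP isSh + as.countP isComb + as.countP isLabelStep = as.length := by
  induction as with
  | nil => simp
  | cons a as ih =>
      cases a <;> simp [List.countP_cons, isSh, isComb, isLabelStep] <;> omega

lemma run_inv {n : ℕ} {c c' : Config N} {as : List (Action N)} (h : Run n c as c') :
    c'.z = c.z + as.length ∧ topJ c'.σ = topJ c.σ + as.countP isSh ∧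
      c'.σ.length + as.countP isComb = c.σ.length + as.countP isSh := by
  induction h with
  | refl c => simp
  | step a happ h ih =>
      obtain ⟨ih1, ih2, ih3⟩ := ih
      cases a with
      | sh =>
          refine ⟨?_, ?_, ?_⟩ <;>
            simp [List.countP_cons, isSh, isComb, doAct, topJ_append] at * <;> omega
      | comb =>
          obtain ⟨-, hlen3⟩ := happ
          refine ⟨?_, ?_, ?_⟩ <;>
            simp [List.countP_cons, isSh, isComb, doAct, topJ_append] at * <;> omega
      | label X =>
          refine ⟨?_, ?_, ?_⟩ <;>
            simp [List.countP_cons, isSh, isComb, doAct] at * <;> omega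
      | nolabel =>
          refine ⟨?_, ?_, ?_⟩ <;>
            simp [List.countP_cons, isSh, isComb, doAct] at * <;> omega

/-- Every completed parse of a sentence of `n` words ends at step `4n - 2`:
a reachable configuration covering the whole sentence with no applicable
action has step number `4n - 2`, and every run from the initial configuration
to a final configuration consists of exactly `4n - 2` actions, namely `n`
shifts, `n - 1` combines, and `2n - 1` label steps (label-`X` or nolabel). -/
theorem final_step_count (N : Type*) [DecidableEq N] (n : ℕ) (hn : 1 ≤ n) :
    (∀ c : Config N, Reaches n (initial N) c → c.σ = [0, n] →
        (∀ a, ¬ App n c a) → c.z = 4 * n - 2) ∧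
    (∀ (as : List (Action N)) (c : Config N),
        Run n (initial N) as c → Final n c →
      as.length = 4 * n - 2 ∧ as.countP isSh = n ∧
        as.countP isComb = n - 1 ∧ as.countP isLabelStep = 2 * n - 1) := by
  constructor
  · intro c hreach hσ hno
    obtain ⟨S, C, htop, hlen, hz⟩ := inv_reaches_s8 hreach
    have hS : S = n := by rw [hσ] at htop; simpa [topJ] using htop.symm
    have hlen2 : c.σ.length = 2 := by rw [hσ]; rfl
    rcases hz with ⟨-, h2⟩ | ⟨hne, h2⟩
    · omega
    · exfalso
      apply hno Action.nolabel
      refine ⟨Nat.not_even_iff_odd.1 hne, by rw [hlen2], by omega⟩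
  · intro as c hrun hfin
    obtain ⟨h1, h2, h3⟩ := run_inv hrun
    obtain ⟨hσ, hz⟩ := hfin
    have hcs := countP_sum (N := N) as
    simp [initial] at h1 h2 h3
    rw [hσ] at h2 h3
    simp [topJ] at h2 h3
    omega

end SpanParser
end
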